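/- If f is (h-s)₂-convex in the second sense, then (1/(b-a))∫_a^b f(x) dx ≤ [ (f(a)+f(b))/2 + f((a+b)/2) ] ∫_0^1 h(t)^s dt. -/

import Mathlib

open MeasureTheory

lemma aux_seg (h : ℝ → ℝ) (s : ℝ) (f : ℝ → ℝ)
    (hconv : ∀ x ∈ Set.Ici (0:ℝ), ∀ y ∈ Set.Ici (0:ℝ), ∀ t ∈ Set.Icc (0:ℝ) 1,
      f (t * x + (1 - t) * y) ≤ h t ^ s * f x + h (1 - t) ^ s * f y)
    (p q : ℝ) (hp : 0 ≤ p) (hpq : p < q)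
    (hfint : IntervalIntegrable f volume p q)
    (hhint : IntervalIntegrable (fun t => h t ^ s) volume 0 1) :
    ∫ x in p..q, f x ≤ (q - p) * ((f p + f q) * ∫ t in (0:ℝ)..1, h t ^ s) := by
  have hc : p - q ≠ 0 := by linarith
  have hq0 : 0 ≤ q := le_of_lt (lt_of_le_of_lt hp hpq)
  have hint1 : IntervalIntegrable (fun t => f ((p - q) * t + q)) volume 0 1 := by
    have h1 := hfint.comp_add_right q
    have h2 := h1.comp_mul_left (c := p - q)
    have h3 : IntervalIntegrable (fun x => f ((p - q) * x + q)) volume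
        ((p - q) / (p - q)) ((q - q) / (p - q)) := h2
    rw [div_self hc] at h3
    simpa using h3.symm
  have hrefl : IntervalIntegrable (fun t => h (1 - t) ^ s) volume 0 1 := by
    have := (hhint.comp_sub_left 1).symm
    simpa using this
  have hint2 : IntervalIntegrable (fun t => h t ^ s * f p + h (1 - t) ^ s * f q)
      volume 0 1 := (hhint.mul_const _).add (hrefl.mul_const _)
  have hmono : ∫ t in (0:ℝ)..1, f ((p - q) * t + q) ≤
      ∫ t in (0:ℝ)..1, (h t ^ s * f p + h (1 - t) ^ s * f q) := by
    apply intervalIntegral.integral_mono_on (by norm_num) hint1 hint2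
    intro t ht
    have hkey := hconv p hp q hq0 t ht
    have heq : (p - q) * t + q = t * p + (1 - t) * q := by ring
    rw [heq]
    exact hkey
  have hcv : ∫ t in (0:ℝ)..1, f ((p - q) * t + q)
      = (q - p)⁻¹ * ∫ x in p..q, f x := by
    rw [intervalIntegral.integral_comp_mul_add f hc q]
    have : (p - q) * 0 + q = q := by ring
    rw [this]
    have : (p - q) * 1 + q = p := by ring
    rw [this, intervalIntegral.integral_symm, smul_eq_mul,
      show p - q = -(q - p) by ring, inv_neg, neg_mul, mul_neg, neg_neg]
  have hrhs : ∫ t in (0:ℝ)..1, (h t ^ s * f p + h (1 - t) ^ s * f q)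
      = (f p + f q) * ∫ t in (0:ℝ)..1, h t ^ s := by
    rw [intervalIntegral.integral_add (hhint.mul_const _) (hrefl.mul_const _),
        intervalIntegral.integral_mul_const, intervalIntegral.integral_mul_const,
        intervalIntegral.integral_comp_sub_left (fun t => h t ^ s) 1]
    norm_num
    ring
  rw [hcv, hrhs] at hmono
  have hqp : 0 < q - p := by linarith
  rw [inv_mul_le_iff₀ hqp] at hmono
  linarith [hmono]

theorem hs2_convex_bullen (h : ℝ → ℝ) (s : ℝ) (f : ℝ → ℝ) (a b : ℝ)
    (hh : ∀ t ∈ Set.Icc (0:ℝ) 1, 0 ≤ h t)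
    (hs : s ∈ Set.Ioc (0:ℝ) 1)
    (hf : ∀ x ∈ Set.Ici (0:ℝ), 0 ≤ f x)
    (hconv : ∀ x ∈ Set.Ici (0:ℝ), ∀ y ∈ Set.Ici (0:ℝ), ∀ t ∈ Set.Icc (0:ℝ) 1,
      f (t * x + (1 - t) * y) ≤ h t ^ s * f x + h (1 - t) ^ s * f y)
    (ha : 0 ≤ a) (hab : a < b)
    (hfint : IntegrableOn f (Set.Icc a b))
    (hhint : IntegrableOn (fun t => h t ^ s) (Set.Icc (0:ℝ) 1)) :
    (1 / (b - a)) * ∫ x in a..b, f x ≤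
      ((f a + f b) / 2 + f ((a + b) / 2)) * ∫ t in (0:ℝ)..1, h t ^ s := by
  set m := (a + b) / 2 with hm
  have ham : a < m := by rw [hm]; linarith
  have hmb : m < b := by rw [hm]; linarith
  have hfi : IntervalIntegrable f volume a b :=
    (intervalIntegrable_iff_integrableOn_Icc_of_le hab.le).mpr hfint
  have hhi : IntervalIntegrable (fun t => h t ^ s) volume 0 1 :=
    (intervalIntegrable_iff_integrableOn_Icc_of_le (by norm_num)).mpr hhint
  have hfi1 : IntervalIntegrable f volume a m :=
    hfi.mono_set (Set.uIcc_subset_uIcc (Set.mem_uIcc.mpr (Or.inl ⟨le_refl a, hab.le⟩))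
      (Set.mem_uIcc.mpr (Or.inl ⟨ham.le, hmb.le⟩)))
  have hfi2 : IntervalIntegrable f volume m b :=
    hfi.mono_set (Set.uIcc_subset_uIcc (Set.mem_uIcc.mpr (Or.inl ⟨ham.le, hmb.le⟩))
      (Set.mem_uIcc.mpr (Or.inl ⟨hab.le, le_refl b⟩)))
  have h1 := aux_seg h s f hconv a m ha ham hfi1 hhi
  have h2 := aux_seg h s f hconv m b (by linarith) hmb hfi2 hhi
  have hsum : (∫ x in a..m, f x) + ∫ x in m..b, f x = ∫ x in a..b, f x :=
    intervalIntegral.integral_add_adjacent_intervals hfi1 hfi2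
  have hba : (0:ℝ) < b - a := by linarith
  rw [← hsum]
  rw [show m - a = (b - a) / 2 from by rw [hm]; ring] at h1
  rw [show b - m = (b - a) / 2 from by rw [hm]; ring] at h2
  rw [div_mul_eq_mul_div, one_mul, div_le_iff₀ hba]
  nlinarith [h1, h2]
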